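/- Let p*_θ be the deformed distribution associated with the Jones et al. likelihood, T a sufficient statistic for θ with respect to L_J^{(α)}, and θ̂ an estimator. Define φ*(T(x)) := E*_θ[θ̂ | T = T(x)] = ∫ θ̂(y) p*_θ(y | T(x)) dy. Then φ* is well-defined independently of θ, and E*_θ[φ*(T(X))] = E*_θ[θ̂(X)] for all θ (unbiasedness transfers under conditioning on a generalized sufficient statistic). -/

import Mathlib

open MeasureTheory Classical in
/-- For the deformed distribution of the Jones et al. likelihood and a generalized
sufficient statistic `T`, the conditional expectation `φ*(T x) = E*_θ[θ̂ | T = T x]` is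
independent of `θ`, and it has the same `p*_θ`-expectation as `θ̂`. -/
theorem jones_conditional_expectation_properties {Ω 𝒯 Θ : Type*} [MeasurableSpace Ω]
    (μ : Measure Ω) (LJ : Ω → Θ → ℝ) (T : Ω → 𝒯) (θhat : Ω → ℝ)
    (pstar : Θ → Ω → ℝ)
    (hps : ∀ θ x, pstar θ x = Real.exp (LJ x θ) / ∫ y, Real.exp (LJ y θ) ∂μ)
    (cond : Θ → Ω → 𝒯 → ℝ)
    (hcond : ∀ θ y t, cond θ y t =
      if T y = t then pstar θ y / ∫ z in {z | T z = t}, pstar θ z ∂μ else 0)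
    (hA : ∀ t, MeasurableSet {z | T z = t})
    (hexp : ∀ θ, Integrable (fun y => Real.exp (LJ y θ)) μ)
    (hpos : ∀ θ (x : Ω), 0 < ∫ z in {z | T z = T x}, Real.exp (LJ z θ) ∂μ)
    -- T is sufficient w.r.t. the Jones et al. likelihood (generalized Koopman definition)
    (hsuff : ∀ x y : Ω, T x = T y → ∃ c : ℝ, ∀ θ : Θ, LJ x θ - LJ y θ = c)
    (hint : ∀ θ, Integrable (fun y => θhat y * pstar θ y) μ) :
    (∀ (θ θ' : Θ) (x : Ω),
      ∫ y, θhat y * cond θ y (T x) ∂μ = ∫ y, θhat y * cond θ' y (T x) ∂μ) ∧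
    (∀ θ : Θ,
      ∫ x, (∫ y, θhat y * cond θ y (T x) ∂μ) * pstar θ x ∂μ
        = ∫ x, θhat x * pstar θ x ∂μ) := by
  classical
  -- the conditional set-integral of `pstar` in terms of `exp (LJ · θ)`
  have hsetInt : ∀ (θ : Θ) (t : 𝒯), (∫ z in {z | T z = t}, pstar θ z ∂μ)
      = (∫ z in {z | T z = t}, Real.exp (LJ z θ) ∂μ) / ∫ y, Real.exp (LJ y θ) ∂μ := by
    intro θ t
    simp only [hps]
    rw [integral_div]
  -- positivity of the normalizing constant (given some point of Ω)
  have hZpos : ∀ (θ : Θ) (_ : Ω), 0 < ∫ y, Real.exp (LJ y θ) ∂μ := fun θ x =>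
    lt_of_lt_of_le (hpos θ x)
      (setIntegral_le_integral (hexp θ) (Filter.Eventually.of_forall fun z => (Real.exp_pos _).le))
  -- `cond θ y (T x)` in closed form
  have hcond' : ∀ (θ : Θ) (x y : Ω), cond θ y (T x) =
      if T y = T x then
        Real.exp (LJ y θ) / ∫ z in {z | T z = T x}, Real.exp (LJ z θ) ∂μ
      else 0 := by
    intro θ x y
    rw [hcond]
    by_cases hy : T y = T x
    · simp only [if_pos hy]
      rw [hsetInt, hps]
      rw [div_div_div_cancel_right₀ (ne_of_gt (hZpos θ x))]
    · simp [hy]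
  constructor
  · -- Part 1: independence of θ
    intro θ θ' x
    have key : ∀ y, cond θ y (T x) = cond θ' y (T x) := by
      intro y
      rw [hcond' θ x y, hcond' θ' x y]
      by_cases hy : T y = T x
      · simp only [if_pos hy]
        set d := LJ y θ - LJ y θ' with hd
        have hz : ∀ z, T z = T x → LJ z θ = Real.exp 0 • (LJ z θ' + d) := by
          intro z hzx
          obtain ⟨c, hc⟩ := hsuff z y (hzx.trans hy.symm)
          have h1 := hc θ
          have h2 := hc θ'
          simp only [Real.exp_zero, one_smul]
          rw [hd]; linarith
        have hzz : ∀ z, T z = T x → Real.exp (LJ z θ) = Real.exp d * Real.exp (LJ z θ') := by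
          intro z hzx
          have := hz z hzx
          simp only [Real.exp_zero, one_smul] at this
          rw [this, Real.exp_add, mul_comm]
        have hI : (∫ z in {z | T z = T x}, Real.exp (LJ z θ) ∂μ)
            = Real.exp d * ∫ z in {z | T z = T x}, Real.exp (LJ z θ') ∂μ := by
          rw [← integral_const_mul]
          exact setIntegral_congr_fun (hA (T x)) fun z hzx => hzz z hzx
        rw [hzz y hy, hI, mul_div_mul_left _ _ (Real.exp_ne_zero d)]
      · simp [hy]
    have : (fun y => θhat y * cond θ y (T x)) = fun y => θhat y * cond θ' y (T x) :=
      funext fun y => by rw [key y]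
    rw [this]
  · -- Part 2: tower property
    intro θ
    rcases isEmpty_or_nonempty Ω with hΩ | hne
    · simp [Measure.eq_zero_of_isEmpty μ]
    have x₀ : Ω := hne.some
    set Z := ∫ y, Real.exp (LJ y θ) ∂μ with hZ
    have hZpos' : 0 < Z := hZpos θ x₀
    set p := pstar θ with hpdef
    have hp_eq : p = fun x => Real.exp (LJ x θ) / Z := funext fun x => hps θ x
    have hp_int : Integrable p μ := by rw [hp_eq]; exact (hexp θ).div_const Z
    have hp_nonneg : ∀ z, 0 ≤ p z := by
      intro z; rw [hp_eq]
      exact div_nonneg (Real.exp_pos _).le hZpos'.le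
    -- the range of T is countable
    have hcnt : (Set.range T).Countable := by
      set ν := μ.withDensity fun z => ENNReal.ofReal (Real.exp (LJ z θ)) with hν
      have hνA : ∀ t : 𝒯, ν {z | T z = t}
          = ENNReal.ofReal (∫ z in {z | T z = t}, Real.exp (LJ z θ) ∂μ) := by
        intro t
        rw [hν, withDensity_apply _ (hA t),
          ofReal_integral_eq_lintegral_ofReal (hexp θ).integrableOn
            (Filter.Eventually.of_forall fun z => (Real.exp_pos _).le)]
      have hνuniv : ν (⋃ t : 𝒯, {z | T z = t}) ≠ ⊤ := by
        refine ne_top_of_le_ne_top ?_ (measure_mono (Set.subset_univ _))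
        rw [hν, withDensity_apply _ MeasurableSet.univ, Measure.restrict_univ,
          ← ofReal_integral_eq_lintegral_ofReal (hexp θ)
            (Filter.Eventually.of_forall fun z => (Real.exp_pos _).le)]
        exact ENNReal.ofReal_ne_top
      have hdisj : Pairwise (Function.onFun Disjoint fun t : 𝒯 => {z | T z = t}) := by
        intro a b hab
        simp only [Function.onFun, Set.disjoint_left]
        intro z hz1 hz2
        exact hab ((hz1 : T z = a).symm.trans hz2)
      have hcm := Measure.countable_meas_pos_of_disjoint_of_meas_iUnion_ne_top ν
        (fun t : 𝒯 => hA t) hdisj hνuniv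
      refine hcm.mono ?_
      rintro t ⟨x, rfl⟩
      show 0 < ν {z | T z = T x}
      rw [hνA]
      exact ENNReal.ofReal_pos.mpr (hpos θ x)
    haveI : Countable (Set.range T) := hcnt.to_subtype
    set S := Set.range T with hS
    set s : S → Set Ω := fun t => {z | T z = (t : 𝒯)} with hs
    have hs_meas : ∀ t : S, MeasurableSet (s t) := fun t => hA t
    have hs_disj : Pairwise (Function.onFun Disjoint s) := by
      intro a b hab
      simp only [hs, Function.onFun, Set.disjoint_left]
      intro z hz1 hz2
      exact hab (Subtype.ext ((hz1 : T z = a).symm.trans hz2))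
    have hs_univ : (⋃ t : S, s t) = Set.univ := by
      ext x
      simp only [Set.mem_iUnion, Set.mem_univ, iff_true]
      exact ⟨⟨T x, Set.mem_range_self x⟩, rfl⟩
    -- positivity of the conditional normalizer
    have hIp : ∀ x : Ω, 0 < ∫ z in {z | T z = T x}, p z ∂μ := by
      intro x
      rw [hpdef, hsetInt]
      exact div_pos (hpos θ x) hZpos'
    set Φ : 𝒯 → ℝ := fun t => ∫ y, θhat y * cond θ y t ∂μ with hΦ
    -- the key per-fiber identity
    have hkey : ∀ x : Ω, Φ (T x) * (∫ z in {z | T z = T x}, p z ∂μ)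
        = ∫ z in {z | T z = T x}, θhat z * p z ∂μ := by
      intro x
      have h1 : Φ (T x) = (∫ z in {z | T z = T x}, θhat z * p z ∂μ)
          / ∫ z in {z | T z = T x}, p z ∂μ := by
        show (∫ y, θhat y * cond θ y (T x) ∂μ) = _
        have hind : (fun y => θhat y * cond θ y (T x))
            = Set.indicator {z | T z = T x}
                (fun y => (θhat y * p y) / ∫ z in {z | T z = T x}, p z ∂μ) := by
          funext y
          rw [hcond θ y (T x)]
          by_cases hy : T y = T x
          · rw [if_pos hy, Set.indicator_of_mem (by exact hy), mul_div_assoc, hpdef]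
          · rw [if_neg hy, Set.indicator_of_notMem (by exact hy), mul_zero]
        rw [hind, integral_indicator (hA (T x)), integral_div]
      rw [h1, div_mul_cancel₀ _ (ne_of_gt (hIp x))]
    set f : Ω → ℝ := fun x => Φ (T x) * p x with hf
    -- f coincides with a constant multiple of p on each fiber
    have hf_fiber : ∀ t : S, Set.EqOn (fun z => Φ (t : 𝒯) * p z) f (s t) := by
      intro t z hz
      have : T z = (t : 𝒯) := hz
      simp only [hf, this]
    have hf_int_piece : ∀ t : S, IntegrableOn f (s t) μ :=
      fun t => ((hp_int.const_mul (Φ (t : 𝒯))).integrableOn).congr_fun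
        (hf_fiber t) (hs_meas t)
    -- per-piece integral identity
    have hpiece : ∀ t : S, ∫ z in s t, f z ∂μ = ∫ z in s t, θhat z * p z ∂μ := by
      rintro ⟨t, x, rfl⟩
      have hseq : s ⟨T x, Set.mem_range_self x⟩ = {z | T z = T x} := rfl
      rw [hseq, ← setIntegral_congr_fun (hA (T x)) (hf_fiber ⟨T x, Set.mem_range_self x⟩),
        integral_const_mul]
      exact hkey x
    -- measurability of f
    have hg_meas : Measurable fun x => Φ (T x) := by
      intro u _
      have : (fun x => Φ (T x)) ⁻¹' u = ⋃ t : S, ⋃ _ : Φ (t : 𝒯) ∈ u, s t := by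
        ext x
        simp only [Set.mem_preimage, Set.mem_iUnion]
        constructor
        · intro hx
          exact ⟨⟨T x, Set.mem_range_self x⟩, hx, rfl⟩
        · rintro ⟨t, ht, hxt⟩
          have : T x = (t : 𝒯) := hxt
          rw [this]; exact ht
      rw [this]
      exact MeasurableSet.iUnion fun t => MeasurableSet.iUnion fun _ => hs_meas t
    have hf_aesm : AEStronglyMeasurable f μ :=
      (hg_meas.aestronglyMeasurable).mul hp_int.aestronglyMeasurable
    -- finiteness of the integral of ‖f‖
    have hf_int : Integrable f μ := by
      refine ⟨hf_aesm, ?_⟩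
      rw [HasFiniteIntegral, ← setLIntegral_univ, ← hs_univ,
        lintegral_iUnion hs_meas hs_disj]
      have hbound : ∀ t : S, ∫⁻ z in s t, ‖f z‖₊ ∂μ ≤ ∫⁻ z in s t, ‖θhat z * p z‖₊ ∂μ := by
        intro t
        simp only [← enorm_eq_nnnorm]
        rw [← ofReal_integral_norm_eq_lintegral_enorm (hf_int_piece t),
          ← ofReal_integral_norm_eq_lintegral_enorm ((hint θ).integrableOn (s := s t))]
        apply ENNReal.ofReal_le_ofReal
        obtain ⟨tv, x, rfl⟩ := t
        have hseq : s ⟨T x, Set.mem_range_self x⟩ = {z | T z = T x} := rfl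
        rw [hseq]
        have h1 : ∫ z in {z | T z = T x}, ‖f z‖ ∂μ
            = |Φ (T x)| * ∫ z in {z | T z = T x}, p z ∂μ := by
          rw [← integral_const_mul]
          refine setIntegral_congr_fun (hA (T x)) ?_
          intro z hz
          have hTz : T z = T x := hz
          simp only [hf, hTz, Real.norm_eq_abs, abs_mul, abs_of_nonneg (hp_nonneg z)]
        have h2 : |Φ (T x)| * ∫ z in {z | T z = T x}, p z ∂μ
            = |∫ z in {z | T z = T x}, θhat z * p z ∂μ| := by
          rw [← hkey x, abs_mul, abs_of_nonneg (hIp x).le]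
        rw [h1, h2]
        calc |∫ z in {z | T z = T x}, θhat z * p z ∂μ|
            ≤ ∫ z in {z | T z = T x}, |θhat z| * |p z| ∂μ := by
              simpa [Real.norm_eq_abs, abs_mul] using
                norm_integral_le_integral_norm (μ := μ.restrict {z | T z = T x})
                  (fun z => θhat z * p z)
          _ = ∫ z in {z | T z = T x}, ‖θhat z * p z‖ ∂μ := by
              simp [Real.norm_eq_abs, abs_mul]
      calc ∑' t : S, ∫⁻ z in s t, ‖f z‖₊ ∂μ
          ≤ ∑' t : S, ∫⁻ z in s t, ‖θhat z * p z‖₊ ∂μ := ENNReal.tsum_le_tsum hbound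
        _ = ∫⁻ z in ⋃ t : S, s t, ‖θhat z * p z‖₊ ∂μ :=
            (lintegral_iUnion hs_meas hs_disj _).symm
        _ ≤ ∫⁻ z, ‖θhat z * p z‖₊ ∂μ := setLIntegral_le_lintegral _ _
        _ < ⊤ := (hint θ).hasFiniteIntegral
    -- conclude
    calc ∫ x, (∫ y, θhat y * cond θ y (T x) ∂μ) * pstar θ x ∂μ
        = ∫ x, f x ∂μ := rfl
      _ = ∫ x in ⋃ t : S, s t, f x ∂μ := by rw [hs_univ, setIntegral_univ]
      _ = ∑' t : S, ∫ x in s t, f x ∂μ :=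
          integral_iUnion hs_meas hs_disj (by rw [hs_univ]; exact hf_int.integrableOn)
      _ = ∑' t : S, ∫ x in s t, θhat x * p x ∂μ := tsum_congr hpiece
      _ = ∫ x in ⋃ t : S, s t, θhat x * p x ∂μ :=
          (integral_iUnion hs_meas hs_disj (by rw [hs_univ]; exact (hint θ).integrableOn)).symm
      _ = ∫ x, θhat x * pstar θ x ∂μ := by rw [hs_univ, setIntegral_univ]
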